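/- If the free group F_k of rank k is a quotient of a one-relator group ⟨a_1,...,a_k | r⟩ on k generators (i.e., there is a surjection ⟨a_1,...,a_k | r⟩ → F_k), then the relator r is trivial in the free group on a_1,...,a_k, i.e., r reduces to the empty word. -/

import Mathlib

/-- Any injective partial function on a finite type extends to a permutation. -/
lemma exists_perm_extend {α : Type*} [Fintype α] [DecidableEq α]
    (f : α → Option α)
    (hinj : ∀ x y z, f x = some z → f y = some z → x = y) :
    ∃ σ : Equiv.Perm α, ∀ x y, f x = some y → σ x = y := by
  classical
  set p : α → Prop := fun x => (f x).isSome with hp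
  set q : α → Prop := fun y => ∃ x, f x = some y with hq
  obtain ⟨ep, hep⟩ : ∃ ep : {x // p x} ≃ {y // q y}, ∀ x hx, (ep ⟨x, hx⟩ : α) = (f x).get hx := by
    refine ⟨Equiv.ofBijective (fun x => ⟨(f x.1).get x.2, ⟨x.1, Option.some_get x.2 |>.symm⟩⟩)
      ⟨?_, ?_⟩, fun _ _ => rfl⟩
    · rintro ⟨x, hx⟩ ⟨y, hy⟩ h
      have h' : (f x).get hx = (f y).get hy := congrArg Subtype.val h
      have := hinj x y ((f x).get hx) (Option.some_get hx).symm
        (by rw [h']; exact (Option.some_get hy).symm)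
      exact Subtype.ext this
    · rintro ⟨y, x, hxy⟩
      have hx : p x := by simp [hp, hxy]
      refine ⟨⟨x, hx⟩, Subtype.ext ?_⟩
      simp [hxy]
  have hcard : Fintype.card {x // ¬ p x} = Fintype.card {y // ¬ q y} := by
    have h1 := Fintype.card_congr ep
    have h2 := Fintype.card_subtype_compl p
    have h3 := Fintype.card_subtype_compl q
    omega
  have en : {x // ¬ p x} ≃ {y // ¬ q y} := Fintype.equivOfCardEq hcard
  refine ⟨Equiv.subtypeCongr ep en, fun x y hxy => ?_⟩
  have hx : p x := by simp [hp, hxy]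
  have : Equiv.subtypeCongr ep en x = (ep ⟨x, hx⟩ : α) := by
    simp [Equiv.subtypeCongr, Equiv.sumCompl_symm_apply_of_pos hx]
  rw [this, hep x hx]
  simp [hxy]

/-- Free groups of finite rank are residually finite: nontrivial elements survive in
some finite permutation group. -/
lemma freeGroup_exists_finite_quotient {k : ℕ} (w : FreeGroup (Fin k)) (hw : w ≠ 1) :
    ∃ (n : ℕ) (ψ : FreeGroup (Fin k) →* Equiv.Perm (Fin (n + 1))), ψ w ≠ 1 := by
  classical
  set L : List (Fin k × Bool) := w.toWord with hL
  set n : ℕ := L.length with hn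
  have hn0 : n ≠ 0 := by
    intro h
    have hnil : L = [] := List.length_eq_zero_iff.mp (by omega)
    apply hw
    rw [← FreeGroup.toWord_eq_nil_iff, ← hL]
    exact hnil
  -- no adjacent cancelling pair in the reduced word `L`
  have hpair : ∀ (j : ℕ) (a : Fin k) (b : Bool),
      L[j]? = some (a, b) → L[j + 1]? = some (a, !b) → False := by
    intro j a b h1 h2
    have hj1 : j + 1 < L.length := (List.getElem?_eq_some_iff.mp h2).1
    have hj : j < L.length := by omega
    have e1 : L[j] = (a, b) := (List.getElem?_eq_some_iff.mp h1).2
    have e2 : L[j + 1] = (a, !b) := (List.getElem?_eq_some_iff.mp h2).2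
    have hdecomp : L = L.take j ++ (a, b) :: (a, !b) :: L.drop (j + 2) := by
      conv_lhs => rw [← List.take_append_drop j L]
      congr 1
      rw [List.drop_eq_getElem_cons hj, e1]
      congr 1
      rw [List.drop_eq_getElem_cons hj1, e2]
    have hred : FreeGroup.reduce L = L := by rw [hL]; exact FreeGroup.reduce_toWord w
    exact FreeGroup.reduce.not (hred.trans hdecomp)
  -- partial injections on `Fin (n+1)`, one for each generator
  set pf : Fin k → Fin (n + 1) → Option (Fin (n + 1)) := fun a x =>
    if h : x.val < n ∧ L[n - 1 - x.val]? = some (a, true) then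
      some ⟨x.val + 1, by omega⟩
    else if 0 < x.val ∧ L[n - x.val]? = some (a, false) then
      some ⟨x.val - 1, by omega⟩
    else none with hpf
  have hchar : ∀ a x z, pf a x = some z →
      (x.val < n ∧ L[n - 1 - x.val]? = some (a, true) ∧ z.val = x.val + 1) ∨
      (0 < x.val ∧ L[n - x.val]? = some (a, false) ∧ z.val = x.val - 1) := by
    intro a x z h
    rw [hpf] at h
    dsimp only at h
    split_ifs at h with h1 h2
    · exact Or.inl ⟨h1.1, h1.2, (congrArg Fin.val (Option.some_inj.mp h)).symm⟩
    · exact Or.inr ⟨h2.1, h2.2, (congrArg Fin.val (Option.some_inj.mp h)).symm⟩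
  have hinj : ∀ a x y z, pf a x = some z → pf a y = some z → x = y := by
    intro a x y z hx hy
    rcases hchar a x z hx with ⟨hx1, hx2, hx3⟩ | ⟨hx1, hx2, hx3⟩ <;>
      rcases hchar a y z hy with ⟨hy1, hy2, hy3⟩ | ⟨hy1, hy2, hy3⟩
    · exact Fin.ext (by omega)
    · -- x branch 1, y branch 2 : contradiction with reducedness
      exfalso
      have hyn : y.val ≤ n := by omega
      have hyx : y.val = x.val + 2 := by omega
      have hidx : n - 1 - x.val = (n - y.val) + 1 := by omega
      rw [hidx] at hx2
      exact hpair (n - y.val) a false hy2 hx2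
    · exfalso
      have hxn : x.val ≤ n := by omega
      have hxy : x.val = y.val + 2 := by omega
      have hidx : n - 1 - y.val = (n - x.val) + 1 := by omega
      rw [hidx] at hy2
      exact hpair (n - x.val) a false hx2 hy2
    · exact Fin.ext (by omega)
  -- extend each partial injection to a permutation
  choose σ hσ using fun a => exists_perm_extend (pf a) (hinj a)
  -- the key evaluation: the image of `w` moves `0` to `n`
  have key : ∀ m (hm : m ≤ n),
      (((L.drop (n - m)).map fun x => cond x.2 (σ x.1) (σ x.1)⁻¹).prod :
        Equiv.Perm (Fin (n + 1))) 0 = ⟨m, by omega⟩ := by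
    intro m
    induction m with
    | zero =>
      intro _
      rw [Nat.sub_zero, List.drop_eq_nil_of_le (by omega), List.map_nil, List.prod_nil]
      rfl
    | succ m ih =>
      intro hm
      have hlt : n - (m + 1) < L.length := by omega
      have hdrop : L.drop (n - (m + 1)) = L[n - (m + 1)] :: L.drop (n - m) := by
        rw [List.drop_eq_getElem_cons hlt, show n - (m + 1) + 1 = n - m by omega]
      obtain ⟨⟨a, b⟩, hab⟩ : ∃ p, L[n - (m + 1)] = p := ⟨_, rfl⟩
      have hgetq : L[n - (m + 1)]? = some (a, b) := List.getElem?_eq_some_iff.mpr ⟨hlt, hab⟩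
      rw [hdrop, List.map_cons, List.prod_cons, Equiv.Perm.mul_apply, ih (by omega), hab]
      cases b with
      | true =>
        show σ a ⟨m, by omega⟩ = ⟨m + 1, by omega⟩
        apply hσ
        simp only [hpf]
        rw [dif_pos ⟨by omega, by rwa [show n - 1 - m = n - (m + 1) by omega]⟩]
      | false =>
        show (σ a)⁻¹ ⟨m, by omega⟩ = ⟨m + 1, by omega⟩
        have h2 : σ a ⟨m + 1, by omega⟩ = ⟨m, by omega⟩ := by
          apply hσ
          simp only [hpf]
          have hneg : ¬((m + 1 : ℕ) < n ∧ L[n - 1 - (m + 1)]? = some (a, true)) := by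
            rintro ⟨hlt2, hget⟩
            apply hpair (n - 1 - (m + 1)) a true hget
            rw [show n - 1 - (m + 1) + 1 = n - (m + 1) by omega]
            exact hgetq
          have hpos : 0 < (m + 1 : ℕ) ∧ L[n - (m + 1)]? = some (a, false) :=
            ⟨Nat.succ_pos _, hgetq⟩
          rw [dif_neg hneg, if_pos hpos]
          exact congrArg some (Fin.ext (by simp))
        rw [← h2, Equiv.Perm.inv_def, Equiv.symm_apply_apply]
  -- conclude
  refine ⟨n, FreeGroup.lift σ, fun h1 => ?_⟩
  have hw' : FreeGroup.lift σ w =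
      ((L.map fun x => cond x.2 (σ x.1) (σ x.1)⁻¹).prod : Equiv.Perm (Fin (n + 1))) := by
    conv_lhs => rw [← FreeGroup.mk_toWord (x := w)]
    rw [FreeGroup.lift_mk, hL]
  have := key n le_rfl
  rw [Nat.sub_self, List.drop_zero] at this
  rw [← hw', h1] at this
  have h0 : (0 : Fin (n + 1)) = ⟨n, by omega⟩ := this
  have : (0 : ℕ) = n := congrArg Fin.val h0
  omega

/-- If the one-relator group `⟨a₁,…,a_k ∣ r⟩` surjects onto the free group of
rank `k`, then the relator `r` is trivial in the free group. -/
theorem relator_trivial_of_surjective_oneRelator (k : ℕ)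
    (r : FreeGroup (Fin k))
    (f : PresentedGroup ({r} : Set (FreeGroup (Fin k))) →* FreeGroup (Fin k))
    (hf : Function.Surjective f) :
    r = 1 := by
  classical
  by_contra hr
  -- the composite surjective endomorphism of the free group killing `r`
  set g : FreeGroup (Fin k) →* FreeGroup (Fin k) :=
    f.comp (PresentedGroup.mk ({r} : Set (FreeGroup (Fin k)))) with hg
  have hgsurj : Function.Surjective g :=
    hf.comp (PresentedGroup.mk_surjective _)
  have hgr : g r = 1 := by
    have : PresentedGroup.mk ({r} : Set (FreeGroup (Fin k))) r = 1 := by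
      rw [show (PresentedGroup.mk ({r} : Set (FreeGroup (Fin k))) r) =
        QuotientGroup.mk r from rfl]
      refine (QuotientGroup.eq_one_iff r).mpr ?_
      exact Subgroup.subset_normalClosure rfl
    rw [hg, MonoidHom.comp_apply, this, map_one]
  -- a finite group detecting `r`
  obtain ⟨n, ψ, hψ⟩ := freeGroup_exists_finite_quotient r hr
  set G := Equiv.Perm (Fin (n + 1)) with hG
  -- the hom-set into G is finite, and precomposition with g is injective
  have : Finite (FreeGroup (Fin k) →* G) := Finite.of_equiv _ FreeGroup.lift
  have hΦinj : Function.Injective (fun χ : FreeGroup (Fin k) →* G => χ.comp g) := by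
    intro χ₁ χ₂ h
    refine MonoidHom.ext fun x => ?_
    obtain ⟨y, rfl⟩ := hgsurj x
    exact DFunLike.congr_fun h y
  have hΦsurj : Function.Surjective (fun χ : FreeGroup (Fin k) →* G => χ.comp g) :=
    Finite.surjective_of_injective hΦinj
  obtain ⟨χ, hχ⟩ := hΦsurj ψ
  have hχ' : χ.comp g = ψ := hχ
  apply hψ
  calc ψ r = (χ.comp g) r := by rw [hχ']
    _ = χ (g r) := rfl
    _ = 1 := by rw [hgr, map_one]
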